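/- For p > 2 prime, the polynomial X² + Y² over an algebraically closed field K of characteristic p is F_p-flat over K if and only if −1 is a square in F_p, equivalently p ≡ 1 (mod 4). -/

import Mathlib

open MvPolynomial

/-- `P` is `𝔽_p`-flat over `K`: every zero of `P` in any field extension of `K`
admits a nontrivial `𝔽_p`-linear combination falling in (the image of) `K`. -/
def IsFpFlat (p : ℕ) {n : ℕ} {K : Type} [Field K] (P : MvPolynomial (Fin n) K) : Prop :=
  ∀ (L : Type) [Field L] (f : K →+* L) (u : Fin n → L),
    MvPolynomial.eval u (MvPolynomial.map f P) = 0 →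
      ∃ lam : Fin n → ZMod p, lam ≠ 0 ∧ (∑ i, ((lam i).val : L) * u i) ∈ Set.range f

/-- For an odd prime `p` and `K` algebraically closed of characteristic `p`, the
polynomial `X² + Y²` is `𝔽_p`-flat over `K` iff `−1` is a square in `𝔽_p`, iff
`p ≡ 1 (mod 4)`. -/
private theorem flat_iff (p : ℕ) [Fact p.Prime] (hp2 : 2 < p)
    {K : Type} [Field K] [IsAlgClosed K] [CharP K p] :
    IsFpFlat p ((X 0) ^ 2 + (X 1) ^ 2 : MvPolynomial (Fin 2) K) ↔
      IsSquare (-1 : ZMod p) := by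
  haveI : NeZero p := ⟨(Fact.out : p.Prime).ne_zero⟩
  constructor
  · intro hflat
    by_contra hns
    obtain ⟨i, hi⟩ := IsAlgClosed.exists_pow_nat_eq (-1 : K) (n := 2) two_pos
    set L := RatFunc K
    set f : K →+* L := algebraMap K L
    set u : Fin 2 → L := ![RatFunc.X, f i * RatFunc.X]
    have heval : MvPolynomial.eval u (MvPolynomial.map f
        ((X 0) ^ 2 + (X 1) ^ 2 : MvPolynomial (Fin 2) K)) = 0 := by
      simp only [map_add, map_pow, MvPolynomial.map_X, eval_add, eval_pow, eval_X]
      show RatFunc.X ^ 2 + (f i * RatFunc.X) ^ 2 = 0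
      have : f i ^ 2 = -1 := by rw [← map_pow, hi, map_neg, map_one]
      ring_nf
      rw [mul_pow, this, neg_one_mul, add_neg_cancel]
    obtain ⟨lam, hlam, c, hc⟩ := hflat L f u heval
    -- the coefficient
    have hcast : ∀ a : ZMod p, ((a.val : K) : K) = (ZMod.castHom (dvd_refl p) K) a := by
      intro a; rw [ZMod.natCast_val]; rfl
    set φ : ZMod p →+* K := ZMod.castHom (dvd_refl p) K
    have hφinj : Function.Injective φ := φ.injective
    set a : K := φ (lam 0) + φ (lam 1) * i with ha
    have hsum : f c = f a * RatFunc.X := by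
      rw [hc, Fin.sum_univ_two]
      show ((lam 0).val : L) * RatFunc.X + ((lam 1).val : L) * (f i * RatFunc.X) = _
      have h0 : ((lam 0).val : L) = f (φ (lam 0)) := by
        rw [← map_natCast f]; congr 1; exact hcast (lam 0)
      have h1 : ((lam 1).val : L) = f (φ (lam 1)) := by
        rw [← map_natCast f]; congr 1; exact hcast (lam 1)
      rw [h0, h1, ha, map_add, map_mul, add_mul, mul_assoc]
    have hane : a ≠ 0 := by
      intro h0
      rcases eq_or_ne (lam 1) 0 with h1 | h1
      · have h0' : lam 0 ≠ 0 := by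
          intro h; apply hlam; funext j; fin_cases j <;> simpa [h, h1]
        rw [ha, h1] at h0
        simp at h0
        exact h0' (hφinj (by simpa using h0))
      · have hφ1 : φ (lam 1) ≠ 0 := fun h => h1 (hφinj (by simpa using h))
        have hieq : i = -φ (lam 0) / φ (lam 1) := by
          rw [eq_div_iff hφ1]; rw [ha] at h0; linear_combination h0
        apply hns
        refine ⟨-(lam 0) / lam 1, ?_⟩
        apply hφinj
        rw [map_mul, map_div₀, map_neg, map_neg, map_one, ← hieq, ← sq, hi]
    have : RatFunc.X = f (c / a) := by
      rw [map_div₀, eq_div_iff (by simpa using hane), mul_comm, ← hsum]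
    have h2 := congrArg RatFunc.intDegree this
    rw [RatFunc.intDegree_X] at h2
    have h3 : f (c / a) = RatFunc.C (c / a) := by
      show algebraMap K (RatFunc K) _ = _; rw [RatFunc.algebraMap_eq_C]
    rw [h3, RatFunc.intDegree_C] at h2
    exact one_ne_zero h2
  · rintro ⟨r, hr⟩
    intro L _ f u heval
    haveI : CharP L p := charP_of_injective_ringHom f.injective p
    set ψ : ZMod p →+* L := ZMod.castHom (dvd_refl p) L
    have hcast : ∀ a : ZMod p, ((a.val : L) : L) = ψ a := by
      intro a; rw [ZMod.natCast_val]; rfl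
    have hr' : ψ r * ψ r = -1 := by
      rw [← map_mul, ← hr, map_neg, map_one]
    have heval' : u 0 ^ 2 + u 1 ^ 2 = 0 := by
      simpa only [map_add, map_pow, MvPolynomial.map_X, eval_add, eval_pow, eval_X] using heval
    have hfac : (u 0 - ψ r * u 1) * (u 0 + ψ r * u 1) = 0 := by
      linear_combination heval' - (u 1)^2 * hr'
    rcases mul_eq_zero.1 hfac with h | h
    · refine ⟨![1, -r], ?_, ⟨0, ?_⟩⟩
      · intro h; have := congrFun h 0; simp at this
      · rw [Fin.sum_univ_two]
        show f 0 = (((1 : ZMod p)).val : L) * u 0 + ((-r).val : L) * u 1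
        rw [hcast, hcast, map_one, map_neg, map_zero, one_mul]
        linear_combination -h
    · refine ⟨![1, r], ?_, ⟨0, ?_⟩⟩
      · intro h; have := congrFun h 0; simp at this
      · rw [Fin.sum_univ_two]
        show f 0 = (((1 : ZMod p)).val : L) * u 0 + ((r).val : L) * u 1
        rw [hcast, hcast, map_one, map_zero, one_mul]
        linear_combination -h

theorem stmt_4 (p : ℕ) [Fact p.Prime] (hp2 : 2 < p)
    {K : Type} [Field K] [IsAlgClosed K] [CharP K p] :
    (IsFpFlat p ((X 0) ^ 2 + (X 1) ^ 2 : MvPolynomial (Fin 2) K) ↔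
        IsSquare (-1 : ZMod p)) ∧
      (IsFpFlat p ((X 0) ^ 2 + (X 1) ^ 2 : MvPolynomial (Fin 2) K) ↔ p % 4 = 1) := by
  have h1 := flat_iff p hp2 (K := K)
  have hodd : ¬ (2 ∣ p) := fun h => by
    have := (Fact.out : p.Prime).eq_one_or_self_of_dvd 2 h; omega
  have h4 : p % 4 = 1 ↔ p % 4 ≠ 3 := by omega
  exact ⟨h1, by rw [h1, ZMod.exists_sq_eq_neg_one_iff, ← h4]⟩
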